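/- Let ⟨·⟩ be a state (positive normalized linear functional) on observables, and let X₁,...,X_m be disjoint regions with a two-point decay bound: |⟨A_X B_Y⟩ − ⟨A_X⟩⟨B_Y⟩| ≤ f(dist(X,Y)) · min{|X|,|Y|} · ‖A_X‖‖B_Y‖ for observables supported on disjoint X, Y. Then for observables A_{X₁},...,A_{X_m} supported on the respective regions, |⟨A_{X₁}⋯A_{X_m}⟩ − ⟨A_{X₁}⟩⋯⟨A_{X_m}⟩| ≤ f(R) · N · ‖A_{X₁}‖⋯‖A_{X_m}‖, where R = min_{k≠l} dist(X_k, X_l) and N = Σ_k |X_k|. -/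

import Mathlib

lemma prod_mem_support {ι Alg : Type*} [NormedRing Alg] [DecidableEq ι]
    (P : Finset ι → Set Alg)
    (hPmul : ∀ (S T : Finset ι) (a b : Alg), a ∈ P S → b ∈ P T → a * b ∈ P (S ∪ T)) :
    ∀ (n : ℕ) (X : Fin (n+1) → Finset ι) (A : Fin (n+1) → Alg),
      (∀ k, A k ∈ P (X k)) →
      (((List.finRange (n+1)).map A).prod) ∈ P (Finset.univ.biUnion X) := by
  intro n
  induction n with
  | zero =>
    intro X A hA
    have h1 : ((List.finRange 1).map A).prod = A 0 := by simp [List.finRange_succ]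
    have h2 : (Finset.univ.biUnion X) = X 0 := by
      ext a; simp [Finset.mem_biUnion, Fin.exists_fin_one]
    rw [h1, h2]; exact hA 0
  | succ p ih =>
    intro X A hA
    have h1 : ((List.finRange (p+2)).map A).prod
        = A 0 * ((List.finRange (p+1)).map (A ∘ Fin.succ)).prod := by
      rw [List.finRange_succ, List.map_cons, List.prod_cons, List.map_map]
    have h2 := hPmul (X 0) (Finset.univ.biUnion (X ∘ Fin.succ)) (A 0)
      (((List.finRange (p+1)).map (A ∘ Fin.succ)).prod) (hA 0)
      (ih (X ∘ Fin.succ) (A ∘ Fin.succ) (fun k => hA k.succ))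
    have h3 : X 0 ∪ Finset.univ.biUnion (X ∘ Fin.succ) = Finset.univ.biUnion X := by
      ext a; simp [Finset.mem_biUnion, Fin.exists_fin_succ, Function.comp]
    rw [h1]; rw [h3] at h2; exact h2

/-- Lemma 4 of Appendix C (multi-region clustering).  Let `φ` be a state (a linear
functional with `|φ(a)| ≤ ‖a‖` and `φ(1) = 1`) on an algebra of observables, with a
notion of support `P : Finset ι → Set Alg` on regions of a lattice with distance `d`,
closed under products (`a ∈ P S`, `b ∈ P T` implies `a b ∈ P (S ∪ T)`).  Assume the
two-point decay bound: for observables `a, b` supported on disjoint regions `S, T`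
whose pairwise distances are at least `r`,
`|φ(ab) − φ(a)φ(b)| ≤ f(r) · min{|S|,|T|} · ‖a‖ ‖b‖` (with `f ≥ 0`).  Then for
observables `A₁, …, A_m` supported on pairwise disjoint regions `X₁, …, X_m` whose
mutual distances are at least `R`,
`|φ(A₁⋯A_m) − φ(A₁)⋯φ(A_m)| ≤ f(R) · N · ‖A₁‖⋯‖A_m‖`, where `N = Σ_k |X_k|`. -/
theorem multi_region_clustering
    {ι Alg : Type*} [NormedRing Alg] [NormedAlgebra ℂ Alg] [DecidableEq ι]
    (d : ι → ι → ℝ) (P : Finset ι → Set Alg) (φ : Alg →ₗ[ℂ] ℂ) (f : ℝ → ℝ)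
    (hφnorm : ∀ a, ‖φ a‖ ≤ ‖a‖) (hφone : φ 1 = 1)
    (hPmul : ∀ (S T : Finset ι) (a b : Alg), a ∈ P S → b ∈ P T → a * b ∈ P (S ∪ T))
    (hf : ∀ r, 0 ≤ f r)
    (htwo : ∀ (S T : Finset ι) (a b : Alg) (r : ℝ), a ∈ P S → b ∈ P T →
      Disjoint S T → (∀ x ∈ S, ∀ y ∈ T, r ≤ d x y) →
      ‖φ (a * b) - φ a * φ b‖ ≤ f r * min S.card T.card * (‖a‖ * ‖b‖))
    {m : ℕ} (X : Fin m → Finset ι)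
    (hdisj : ∀ k l, k ≠ l → Disjoint (X k) (X l))
    (A : Fin m → Alg) (hA : ∀ k, A k ∈ P (X k))
    (R : ℝ) (hR : ∀ k l, k ≠ l → ∀ x ∈ X k, ∀ y ∈ X l, R ≤ d x y) :
    ‖φ (((List.finRange m).map A).prod) - ∏ k, φ (A k)‖
      ≤ f R * (∑ k, ((X k).card : ℝ)) * ∏ k, ‖A k‖ := by
  induction m with
  | zero => simp [hφone]
  | succ n ih =>
    specialize ih (X ∘ Fin.succ) (fun k l h => hdisj k.succ l.succ (by simpa using h))
      (A ∘ Fin.succ) (fun k => hA k.succ)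
      (fun k l h => hR k.succ l.succ (by simpa using h))
    cases n with
    | zero =>
      have h1 : ((List.finRange 1).map A).prod = A 0 := by simp [List.finRange_succ]
      rw [h1]
      have : ∏ k, φ (A k) = φ (A 0) := by simp
      rw [this, sub_self, norm_zero]
      have : (0:ℝ) ≤ ∑ k, ((X k).card : ℝ) := Finset.sum_nonneg fun _ _ => by positivity
      have h2 : (0:ℝ) ≤ ∏ k, ‖A k‖ := Finset.prod_nonneg fun _ _ => norm_nonneg _
      exact mul_nonneg (mul_nonneg (hf R) this) h2
    | succ p =>
      set B := ((List.finRange (p+1)).map (A ∘ Fin.succ)).prod with hB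
      have h1 : ((List.finRange (p+2)).map A).prod = A 0 * B := by
        rw [List.finRange_succ, List.map_cons, List.prod_cons, List.map_map]
      have hBmem : B ∈ P (Finset.univ.biUnion (X ∘ Fin.succ)) :=
        prod_mem_support P hPmul p (X ∘ Fin.succ) (A ∘ Fin.succ) (fun k => hA k.succ)
      have hDisj : Disjoint (X 0) (Finset.univ.biUnion (X ∘ Fin.succ)) := by
        rw [Finset.disjoint_biUnion_right]
        exact fun k _ => hdisj 0 k.succ (Fin.succ_ne_zero k).symm
      have hDist : ∀ x ∈ X 0, ∀ y ∈ Finset.univ.biUnion (X ∘ Fin.succ), R ≤ d x y := by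
        intro x hx y hy
        obtain ⟨k, -, hy⟩ := Finset.mem_biUnion.mp hy
        exact hR 0 k.succ (Fin.succ_ne_zero k).symm x hx y hy
      have h2 := htwo (X 0) (Finset.univ.biUnion (X ∘ Fin.succ)) (A 0) B R (hA 0)
        hBmem hDisj hDist
      have hBnorm : ‖B‖ ≤ ∏ k : Fin (p+1), ‖A k.succ‖ := by
        have hne : (List.finRange (p+1)).map (A ∘ Fin.succ) ≠ [] := by
          simp [List.finRange_succ]
        calc ‖B‖ ≤ (((List.finRange (p+1)).map (A ∘ Fin.succ)).map norm).prod :=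
              List.norm_prod_le' hne
          _ = ∏ k : Fin (p+1), ‖A k.succ‖ := by
              rw [List.map_map, Fin.prod_univ_def]; rfl
      have hPi : (0:ℝ) ≤ ∏ k : Fin (p+1), ‖A k.succ‖ :=
        Finset.prod_nonneg fun _ _ => norm_nonneg _
      have hT1 : ‖φ (A 0 * B) - φ (A 0) * φ B‖
          ≤ f R * ((X 0).card : ℝ) * (‖A 0‖ * ∏ k : Fin (p+1), ‖A k.succ‖) := by
        refine h2.trans ?_
        have hmin : ((min (X 0).card ((Finset.univ.biUnion (X ∘ Fin.succ)).card) : ℕ) : ℝ)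
            ≤ ((X 0).card : ℝ) := by
          exact_mod_cast Nat.min_le_left _ _
        have hAB : ‖A 0‖ * ‖B‖ ≤ ‖A 0‖ * ∏ k : Fin (p+1), ‖A k.succ‖ :=
          mul_le_mul_of_nonneg_left hBnorm (norm_nonneg _)
        have := mul_le_mul (mul_le_mul_of_nonneg_left hmin (hf R)) hAB
          (mul_nonneg (norm_nonneg _) (norm_nonneg _))
          (mul_nonneg (hf R) (Nat.cast_nonneg _))
        exact this
      rw [h1, Fin.prod_univ_succ]
      have key : φ (A 0 * B) - φ (A 0) * ∏ k : Fin (p+1), φ (A k.succ)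
          = (φ (A 0 * B) - φ (A 0) * φ B)
            + φ (A 0) * (φ B - ∏ k : Fin (p+1), φ (A k.succ)) := by ring
      calc ‖φ (A 0 * B) - φ (A 0) * ∏ k : Fin (p+1), φ (A k.succ)‖
          ≤ ‖φ (A 0 * B) - φ (A 0) * φ B‖
            + ‖A 0‖ * ‖φ B - ∏ k : Fin (p+1), φ (A k.succ)‖ := by
            rw [key]
            refine (norm_add_le _ _).trans (add_le_add le_rfl ?_)
            rw [norm_mul]
            exact mul_le_mul_of_nonneg_right (hφnorm _) (norm_nonneg _)
        _ ≤ f R * ((X 0).card : ℝ) * (‖A 0‖ * ∏ k : Fin (p+1), ‖A k.succ‖)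
            + ‖A 0‖ * (f R * (∑ k : Fin (p+1), ((X k.succ).card : ℝ))
              * ∏ k : Fin (p+1), ‖A k.succ‖) :=
            add_le_add hT1 (mul_le_mul_of_nonneg_left ih (norm_nonneg _))
        _ = f R * (∑ k : Fin (p+2), ((X k).card : ℝ)) * ∏ k : Fin (p+2), ‖A k‖ := by
            rw [Fin.sum_univ_succ (f := fun k : Fin (p+2) => ((X k).card : ℝ)),
              Fin.prod_univ_succ (f := fun k : Fin (p+2) => ‖A k‖)]
            ring
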